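/- The point ∞ is an explosion point for Ẽ(𝓕) ∪ {∞}: the set Ẽ(𝓕) ∪ {∞} is a connected subspace of the one-point compactification of ℝ × ℤ^ℕ, and Ẽ(𝓕) is totally separated. -/

import Mathlib

open Set Filter Topology OnePoint

noncomputable section

/-- The space of external addresses: integer sequences `s₀ s₁ s₂ …`. -/
abbrev Addr : Type := ℕ → ℤ

/-- The one-sided shift on external addresses. -/
def shift (s : Addr) : Addr := fun n => s (n + 1)

/-- The model map `𝓕(t, s) = (F(t) − 2π|s₁|, σ(s))`, where `F(t) = eᵗ − 1`. -/
def Fmodel : ℝ × Addr → ℝ × Addr :=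
  fun x => (Real.exp x.1 - 1 - 2 * Real.pi * |(x.2 1 : ℝ)|, shift x.2)

/-- The model Julia set `J(𝓕)`: points whose forward orbit stays in `[0,∞) × ℤ^ℕ`. -/
def JF : Set (ℝ × Addr) := {x | ∀ n : ℕ, 0 ≤ (Fmodel^[n] x).1}

/-- The model escaping set `I(𝓕)`. -/
def IF : Set (ℝ × Addr) :=
  {x | x ∈ JF ∧ Tendsto (fun n => (Fmodel^[n] x).1) atTop atTop}

/-- An address `s` is exponentially bounded if `(t, s) ∈ J(𝓕)` for some `t`. -/
def ExpBounded (s : Addr) : Prop := ∃ t : ℝ, (t, s) ∈ JF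

/-- The minimal potential `t_s = min {t ≥ 0 : (t, s) ∈ J(𝓕)}` of an address `s`. -/
def tmin (s : Addr) : ℝ := sInf {t | (t, s) ∈ JF}

/-- An exponentially bounded address `s` is fast if the endpoint `(t_s, s)` escapes. -/
def Fast (s : Addr) : Prop := ExpBounded s ∧ (tmin s, s) ∈ IF

/-- The set `Ẽ(𝓕)` of escaping endpoints of the model: the points `(t_s, s)` for fast `s`. -/
def escEndF : Set (ℝ × Addr) := {x | ∃ s : Addr, Fast s ∧ x = (tmin s, s)}

/-- The inverse `F⁻¹(t) = log(1 + t)` of `F(t) = eᵗ − 1`. -/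
def Finv (t : ℝ) : ℝ := Real.log (1 + t)

namespace ME

/-! ### Basic orbit lemmas -/

def Torb (n : ℕ) (x : ℝ × Addr) : ℝ := (Fmodel^[n] x).1

lemma shift_iterate (s : Addr) (n p : ℕ) : (shift^[n] s) p = s (p + n) := by
  induction n generalizing s with
  | zero => rfl
  | succ n ih =>
      rw [Function.iterate_succ_apply, ih (shift s)]
      show s (p + n + 1) = s (p + (n + 1)); ring_nf

lemma iterate_snd (x : ℝ × Addr) (n : ℕ) : (Fmodel^[n] x).2 = shift^[n] x.2 := by
  induction n with
  | zero => rfl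
  | succ n ih => rw [Function.iterate_succ_apply', Function.iterate_succ_apply']
                 show shift (Fmodel^[n] x).2 = _
                 rw [ih]

lemma Torb_zero (x : ℝ × Addr) : Torb 0 x = x.1 := rfl

lemma Torb_succ (x : ℝ × Addr) (n : ℕ) :
    Torb (n + 1) x = Real.exp (Torb n x) - 1 - 2 * Real.pi * |(x.2 (n + 1) : ℝ)| := by
  unfold Torb
  rw [Function.iterate_succ_apply']
  show Real.exp (Fmodel^[n] x).1 - 1 - 2 * Real.pi * |(((Fmodel^[n] x).2 1 : ℤ) : ℝ)| = _
  rw [iterate_snd, shift_iterate]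
  norm_num [add_comm]

lemma Torb_shift (x : ℝ × Addr) (m n : ℕ) :
    Torb (m + n) x = Torb m (Fmodel^[n] x) := by
  unfold Torb; rw [← Function.iterate_add_apply]

lemma Torb_congr {x y : ℝ × Addr} (n : ℕ) (h1 : x.1 = y.1)
    (h2 : ∀ p, 1 ≤ p → p ≤ n → x.2 p = y.2 p) : Torb n x = Torb n y := by
  induction n with
  | zero => simpa [Torb_zero] using h1
  | succ n ih =>
      rw [Torb_succ, Torb_succ, ih fun p h1p h2p => h2 p h1p (h2p.trans (Nat.le_succ n)),
        h2 (n+1) (Nat.le_add_left 1 n) le_rfl]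

lemma Torb_mono {t t' : ℝ} (s : Addr) (h : t ≤ t') (n : ℕ) :
    Torb n (t, s) ≤ Torb n (t', s) := by
  induction n with
  | zero => simpa [Torb_zero]
  | succ n ih =>
      rw [Torb_succ, Torb_succ]
      have := Real.exp_le_exp.mpr ih
      linarith

lemma continuous_Torb (n : ℕ) : Continuous (Torb n) := by
  have hF : Continuous Fmodel := by
    apply Continuous.prodMk
    · have hc : Continuous (fun z : ℤ => (z : ℝ)) := continuous_of_discreteTopology
      have h1 : Continuous fun x : ℝ × Addr => ((x.2 1 : ℤ) : ℝ) :=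
        hc.comp ((continuous_apply 1).comp continuous_snd)
      exact ((Real.continuous_exp.comp continuous_fst).sub continuous_const).sub
        (continuous_const.mul h1.abs)
    · exact (continuous_pi fun i => (continuous_apply (i+1)).comp continuous_snd)
  exact continuous_fst.comp (hF.iterate n)


/-! ### JF basics -/

lemma mem_JF_iff {x : ℝ × Addr} : x ∈ JF ↔ ∀ n, 0 ≤ Torb n x := Iff.rfl

lemma JF_closed : IsClosed JF := by
  have : JF = ⋂ n : ℕ, {x | 0 ≤ Torb n x} := by
    ext x; simp [mem_JF_iff, Set.mem_iInter]
  rw [this]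
  exact isClosed_iInter fun n => isClosed_le continuous_const (continuous_Torb n)

lemma JF_step {x : ℝ × Addr} (h : x ∈ JF) : Fmodel x ∈ JF := by
  intro n
  have := h (n + 1)
  rwa [Function.iterate_succ_apply] at this

lemma JF_iterate {x : ℝ × Addr} (h : x ∈ JF) (n : ℕ) : Fmodel^[n] x ∈ JF := by
  induction n with
  | zero => exact h
  | succ n ih => rw [Function.iterate_succ_apply']; exact JF_step ih

lemma JF_mono {t t' : ℝ} {s : Addr} (h : (t, s) ∈ JF) (ht : t ≤ t') : (t', s) ∈ JF :=
  fun n => (h n).trans (Torb_mono s ht n)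

lemma JF_nonneg {t : ℝ} {s : Addr} (h : (t, s) ∈ JF) : 0 ≤ t := h 0

lemma JF_congr {t : ℝ} {s s' : Addr} (h : ∀ p, 1 ≤ p → s p = s' p) :
    (t, s) ∈ JF ↔ (t, s') ∈ JF := by
  have key : ∀ n, Torb n (t, s) = Torb n (t, s') :=
    fun n => Torb_congr n rfl fun p h1 _ => h p h1
  constructor <;> intro hm n
  · show 0 ≤ Torb n (t, s'); rw [← key n]; exact hm n
  · show 0 ≤ Torb n (t, s); rw [key n]; exact hm n

/-! ### tmin basics -/

lemma tmin_bddBelow (s : Addr) : BddBelow {t | (t, s) ∈ JF} :=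
  ⟨0, fun t ht => JF_nonneg ht⟩

lemma tmin_le {t : ℝ} {s : Addr} (h : (t, s) ∈ JF) : tmin s ≤ t :=
  csInf_le (tmin_bddBelow s) h

lemma tmin_mem {s : Addr} (h : ExpBounded s) : (tmin s, s) ∈ JF := by
  have hc : Continuous fun t : ℝ => (t, s) := continuous_id.prodMk continuous_const
  have hcl : IsClosed {t | (t, s) ∈ JF} := JF_closed.preimage hc
  exact hcl.csInf_mem h (tmin_bddBelow s)

lemma tmin_nonneg {s : Addr} (h : ExpBounded s) : 0 ≤ tmin s := JF_nonneg (tmin_mem h)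

lemma expBounded_shift {s : Addr} (h : ExpBounded s) : ExpBounded (shift s) := by
  obtain ⟨t, ht⟩ := h
  exact ⟨(Fmodel (t, s)).1, by simpa [Fmodel] using JF_step ht⟩

lemma tmin_shift {s : Addr} (h : ExpBounded s) :
    tmin (shift s) = Real.exp (tmin s) - 1 - 2 * Real.pi * |(s 1 : ℝ)| := by
  have h1 : (Fmodel (tmin s, s)) ∈ JF := JF_step (tmin_mem h)
  have hle : tmin (shift s) ≤ Real.exp (tmin s) - 1 - 2 * Real.pi * |(s 1 : ℝ)| := by
    apply tmin_le; simpa [Fmodel] using h1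
  rcases eq_or_lt_of_le hle with heq | hlt
  · exact heq
  · exfalso
    set t' := tmin (shift s) with ht'
    have ht'0 : 0 ≤ t' := tmin_nonneg (expBounded_shift h)
    set A := 2 * Real.pi * |(s 1 : ℝ)| with hA
    have hA0 : 0 ≤ A := by positivity
    set t'' := Real.log (1 + t' + A) with ht''
    have hpos : (0:ℝ) < 1 + t' + A := by linarith
    have key : Real.exp t'' - 1 - A = t' := by
      rw [ht'', Real.exp_log hpos]; ring
    have h2 : (t'', s) ∈ JF := by
      intro n
      have hstep : Fmodel (t'', s) = (t', shift s) := by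
        have hkey2 : Real.exp t'' - 1 - 2 * Real.pi * |((s 1 : ℤ) : ℝ)| = t' := key
        show (Real.exp t'' - 1 - 2 * Real.pi * |((s 1 : ℤ) : ℝ)|, shift s) = (t', shift s)
        rw [hkey2]
      cases n with
      | zero => exact Real.log_nonneg (by linarith)
      | succ n =>
          have hmem : (t', shift s) ∈ JF := tmin_mem (expBounded_shift h)
          have h3 := hmem n
          rw [Function.iterate_succ_apply, hstep]
          exact h3
    have h4 : tmin s ≤ t'' := tmin_le h2
    have h5 : t'' < tmin s := by
      have : 1 + t' + A < Real.exp (tmin s) := by linarith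
      calc t'' = Real.log (1 + t' + A) := rfl
        _ < Real.log (Real.exp (tmin s)) := by
            exact Real.log_lt_log hpos this
        _ = tmin s := Real.log_exp _
    linarith

lemma Torb_tmin {s : Addr} (h : ExpBounded s) (n : ℕ) :
    Torb n (tmin s, s) = tmin (shift^[n] s) := by
  induction n generalizing s with
  | zero => rfl
  | succ n ih =>
      have hstep : Fmodel (tmin s, s) = (tmin (shift s), shift s) := by
        simp only [Fmodel]
        rw [tmin_shift h]
      have : Torb (n + 1) (tmin s, s) = Torb n (Fmodel (tmin s, s)) := by
        unfold Torb; rw [Function.iterate_succ_apply]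
      rw [this, hstep, ih (expBounded_shift h), Function.iterate_succ_apply]

lemma escEndF_mem {x : ℝ × Addr} (h : x ∈ escEndF) :
    Fast x.2 ∧ x.1 = tmin x.2 := by
  obtain ⟨s, hs, rfl⟩ := h
  exact ⟨hs, rfl⟩

lemma escEndF_subset_JF : escEndF ⊆ JF := by
  rintro x ⟨s, hs, rfl⟩
  exact hs.2.1


/-! ### The backward-iteration function b -/

def bfun : ℕ → Addr → ℝ
  | 0, _ => 0
  | n+1, s => Real.log (1 + bfun n (shift s) + 2 * Real.pi * |((s 1 : ℤ) : ℝ)|)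

lemma bfun_nonneg (n : ℕ) (s : Addr) : 0 ≤ bfun n s := by
  induction n generalizing s with
  | zero => exact le_rfl
  | succ n ih =>
      show 0 ≤ Real.log _
      have : (0:ℝ) ≤ 2 * Real.pi * |((s 1 : ℤ) : ℝ)| := by positivity
      exact Real.log_nonneg (by have := ih (shift s); linarith)

lemma bfun_arg_pos (n : ℕ) (s : Addr) :
    (0:ℝ) < 1 + bfun n (shift s) + 2 * Real.pi * |((s 1 : ℤ) : ℝ)| := by
  have := bfun_nonneg n (shift s)
  have h2 : (0:ℝ) ≤ 2 * Real.pi * |((s 1 : ℤ) : ℝ)| := by positivity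
  linarith

lemma bfun_mono (n : ℕ) (s : Addr) : bfun n s ≤ bfun (n+1) s := by
  induction n generalizing s with
  | zero =>
      show (0:ℝ) ≤ Real.log _
      have h2 : (0:ℝ) ≤ 2 * Real.pi * |((s 1 : ℤ) : ℝ)| := by positivity
      exact Real.log_nonneg (by simp only [bfun]; linarith)
  | succ n ih =>
      show Real.log _ ≤ Real.log _
      apply Real.log_le_log (bfun_arg_pos n s)
      have := ih (shift s)
      linarith

lemma bfun_le_of_ge {m n : ℕ} (h : m ≤ n) (s : Addr) : bfun m s ≤ bfun n s := by
  induction n with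
  | zero => rw [Nat.le_zero.mp h]
  | succ n ih =>
      rcases Nat.lt_or_ge m (n+1) with h1 | h1
      · exact (ih (Nat.lt_succ_iff.mp h1)).trans (bfun_mono n s)
      · rw [Nat.le_antisymm h h1]

lemma bfun_congr {n : ℕ} {s s' : Addr} (h : ∀ p, 1 ≤ p → p ≤ n → s p = s' p) :
    bfun n s = bfun n s' := by
  induction n generalizing s s' with
  | zero => rfl
  | succ n ih =>
      show Real.log _ = Real.log _
      rw [h 1 le_rfl (Nat.le_add_left 1 n),
        ih fun p h1 h2 => by
          show s (p+1) = s' (p+1)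
          exact h (p+1) (Nat.le_add_left 1 p) (by omega)]
      rfl

lemma Torb_bfun_self (n : ℕ) (s : Addr) : Torb n (bfun n s, s) = 0 := by
  induction n generalizing s with
  | zero => rfl
  | succ n ih =>
      have hstep : Fmodel (bfun (n+1) s, s) = (bfun n (shift s), shift s) := by
        show (Real.exp (bfun (n+1) s) - 1 - 2 * Real.pi * |((s 1 : ℤ) : ℝ)|, shift s) = _
        rw [show Real.exp (bfun (n+1) s) = 1 + bfun n (shift s) + 2 * Real.pi * |((s 1 : ℤ) : ℝ)|
          from Real.exp_log (bfun_arg_pos n s)]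
        exact congrArg (fun z => (z, shift s)) (by ring)
      have : Torb (n + 1) (bfun (n+1) s, s) = Torb n (Fmodel (bfun (n+1) s, s)) := by
        unfold Torb; rw [Function.iterate_succ_apply]
      rw [this, hstep, ih]

lemma mem_JF_of_bfun_le {t : ℝ} {s : Addr} (h : ∀ n, bfun n s ≤ t) : (t, s) ∈ JF := by
  intro n
  show 0 ≤ Torb n (t, s)
  calc (0:ℝ) = Torb n (bfun n s, s) := (Torb_bfun_self n s).symm
    _ ≤ Torb n (t, s) := Torb_mono s (h n) n

lemma bfun_le_of_mem_JF {x : ℝ × Addr} (h : x ∈ JF) (n : ℕ) : bfun n x.2 ≤ x.1 := by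
  induction n generalizing x with
  | zero => exact h 0
  | succ n ih =>
      have h2 := ih (JF_step h)
      have h2' : bfun n (shift x.2) ≤ Real.exp x.1 - 1 - 2 * Real.pi * |((x.2 1 : ℤ) : ℝ)| := h2
      show Real.log _ ≤ x.1
      rw [← Real.log_exp x.1]
      apply Real.log_le_log (bfun_arg_pos n x.2)
      linarith

lemma bfun_le_tmin {s : Addr} (h : ExpBounded s) (n : ℕ) : bfun n s ≤ tmin s :=
  bfun_le_of_mem_JF (tmin_mem h) n

lemma exists_bfun_ge {s : Addr} (h : ExpBounded s) {ε : ℝ} (hε : 0 < ε) :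
    ∃ N, tmin s - ε ≤ bfun N s := by
  by_contra hc
  push_neg at hc
  have : (tmin s - ε, s) ∈ JF := mem_JF_of_bfun_le fun n => (hc n).le
  have := tmin_le this
  linarith

/-! ### Ndom -/

def Ndom (x : ℝ × Addr) (ε : ℝ) : ℕ := sInf {N | x.1 - ε ≤ bfun N x.2}

lemma Ndom_nonempty {x : ℝ × Addr} (hx : x ∈ escEndF) {ε : ℝ} (hε : 0 < ε) :
    {N | x.1 - ε ≤ bfun N x.2}.Nonempty := by
  obtain ⟨hfast, hx1⟩ := escEndF_mem hx
  obtain ⟨N, hN⟩ := exists_bfun_ge hfast.1 hε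
  exact ⟨N, by rw [hx1]; exact hN⟩

lemma Ndom_spec {x : ℝ × Addr} (hx : x ∈ escEndF) {ε : ℝ} (hε : 0 < ε) :
    x.1 - ε ≤ bfun (Ndom x ε) x.2 :=
  Nat.sInf_mem (Ndom_nonempty hx hε)

lemma Ndom_anti {x : ℝ × Addr} (hx : x ∈ escEndF) {ε ε' : ℝ} (hε : 0 < ε) (h : ε ≤ ε') :
    Ndom x ε' ≤ Ndom x ε := by
  apply Nat.sInf_le
  have := Ndom_spec hx hε
  show x.1 - ε' ≤ _
  linarith

/-! ### Expansion lemmas -/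

def FR (d : ℝ) : ℝ := Real.exp d - 1

lemma FR_iter_succ (d : ℝ) (n : ℕ) : FR^[n+1] d = Real.exp (FR^[n] d) - 1 := by
  rw [Function.iterate_succ_apply']; rfl

lemma FR_nonneg {d : ℝ} (h : 0 ≤ d) : 0 ≤ FR d := by
  have := Real.add_one_le_exp d; unfold FR; linarith

lemma FR_iter_nonneg {d : ℝ} (h : 0 ≤ d) (n : ℕ) : 0 ≤ FR^[n] d := by
  induction n with
  | zero => exact h
  | succ n ih => rw [Function.iterate_succ_apply']; exact FR_nonneg ih

lemma exp_quad {x : ℝ} (h : 0 ≤ x) : 1 + x + x^2/4 ≤ Real.exp x := by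
  have h1 : Real.exp x = Real.exp (x/2) * Real.exp (x/2) := by
    rw [← Real.exp_add]; ring_nf
  have h2 : 1 + x/2 ≤ Real.exp (x/2) := by have := Real.add_one_le_exp (x/2); linarith
  have h3 : (0:ℝ) ≤ 1 + x/2 := by linarith
  nlinarith [mul_le_mul h2 h2 h3 (Real.exp_nonneg (x/2))]

lemma Torb_expand {t d : ℝ} {s : Addr} (h : (t, s) ∈ JF) (hd : 0 ≤ d) (n : ℕ) :
    FR^[n] d + Torb n (t, s) ≤ Torb n (t + d, s) := by
  induction n with
  | zero => show FR^[0] d + t ≤ t + d; simp [add_comm]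
  | succ n ih =>
      rw [Torb_succ, Torb_succ, FR_iter_succ]
      simp only [show ((t+d, s).2 : Addr) = s from rfl, show ((t, s).2 : Addr) = s from rfl]
      set u := Torb n (t, s) with hu
      set w := Torb n (t + d, s) with hw
      have hu0 : 0 ≤ u := h n
      have he : FR^[n] d ≤ w - u := by linarith
      have he0 : 0 ≤ FR^[n] d := FR_iter_nonneg hd n
      have key : Real.exp (FR^[n] d) ≤ Real.exp w - Real.exp u + 1 := by
        have h1 : Real.exp w = Real.exp u * Real.exp (w - u) := by
          rw [← Real.exp_add]; ring_nf
        have h2 : Real.exp (FR^[n] d) ≤ Real.exp (w - u) := Real.exp_le_exp.mpr he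
        have h3 : (1:ℝ) ≤ Real.exp u := Real.one_le_exp hu0
        nlinarith [Real.exp_pos (w-u), Real.one_le_exp (he0.trans he)]
      linarith

lemma FR_iter_ge_geom {d : ℝ} (hd : 0 < d) (n : ℕ) : d * (1 + d/4)^n ≤ FR^[n] d := by
  induction n with
  | zero => simpa using le_rfl
  | succ n ih =>
      rw [FR_iter_succ]
      have h1 : 0 ≤ FR^[n] d := FR_iter_nonneg hd.le n
      have hpow : (1:ℝ) ≤ (1+d/4)^n := by
        have := pow_le_pow_right₀ (show (1:ℝ) ≤ 1+d/4 by linarith) (Nat.zero_le n)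
        simpa using this
      have hdn : d ≤ FR^[n] d := by
        calc d = d * 1 := (mul_one d).symm
          _ ≤ d * (1+d/4)^n := by apply mul_le_mul_of_nonneg_left hpow hd.le
          _ ≤ FR^[n] d := ih
      have h2 : 1 + FR^[n] d + (FR^[n] d)^2/4 ≤ Real.exp (FR^[n] d) := exp_quad h1
      calc d * (1+d/4)^(n+1) = (d * (1+d/4)^n) * (1+d/4) := by ring
        _ ≤ FR^[n] d * (1+d/4) := by
            apply mul_le_mul_of_nonneg_right ih (by linarith)
        _ ≤ Real.exp (FR^[n] d) - 1 := by nlinarith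

lemma exists_FR_iter_ge {d : ℝ} (hd : 0 < d) (M : ℝ) (R : ℕ) :
    ∃ n, R ≤ n ∧ M ≤ FR^[n] d := by
  obtain ⟨n0, hn0⟩ := pow_unbounded_of_one_lt (M / d) (by linarith : (1:ℝ) < 1 + d/4)
  refine ⟨max R n0, le_max_left _ _, ?_⟩
  have h2 : ((1:ℝ)+d/4)^n0 ≤ (1+d/4)^(max R n0) :=
    pow_le_pow_right₀ (by linarith) (le_max_right _ _)
  have h3 : M ≤ d * (1+d/4)^(max R n0) := by
    rw [div_lt_iff₀ hd] at hn0
    have := mul_le_mul_of_nonneg_left h2 hd.le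
    linarith
  exact h3.trans (FR_iter_ge_geom hd _)


/-! ### log lower bound for orbits -/

lemma Torb_ge_log {x : ℝ × Addr} (h : x ∈ JF) (n : ℕ) :
    Real.log (1 + 2 * Real.pi * |((x.2 (n+1) : ℤ) : ℝ)|) ≤ Torb n x := by
  have h1 : 0 ≤ Torb (n+1) x := h (n+1)
  rw [Torb_succ] at h1
  have harg : (0:ℝ) < 1 + 2 * Real.pi * |((x.2 (n+1) : ℤ) : ℝ)| := by positivity
  calc Real.log (1 + 2 * Real.pi * |((x.2 (n+1) : ℤ) : ℝ)|)
      ≤ Real.log (Real.exp (Torb n x)) := Real.log_le_log harg (by linarith)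
    _ = Torb n x := Real.log_exp _

/-! ### Numeric helper -/

lemma exp_cube : Real.exp 3 = Real.exp 1 ^ 3 := by
  rw [show (3:ℝ) = (3:ℕ) * 1 by norm_num, Real.exp_nat_mul]

lemma exp_sq : Real.exp 2 = Real.exp 1 ^ 2 := by
  rw [show (2:ℝ) = (2:ℕ) * 1 by norm_num, Real.exp_nat_mul]

lemma e_poly : (11:ℝ) ≤ Real.exp 3 - Real.exp 2 - 1 := by
  have h1 := Real.exp_one_gt_d9
  have h2 := Real.exp_one_lt_d9
  rw [exp_cube, exp_sq]
  nlinarith [h1, h2, sq_nonneg (Real.exp 1)]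

lemma num_key {G v : ℝ} (hG : 3 ≤ G) (hGv : G ≤ v) :
    Real.exp (v - 1) + Real.exp (G - 3) + 2 + 2 * Real.pi ≤ Real.exp v := by
  have hpi := Real.pi_lt_d2
  have h1 : Real.exp v = Real.exp (v - 3) * Real.exp 3 := by
    rw [← Real.exp_add]; ring_nf
  have h2 : Real.exp (v - 1) = Real.exp (v - 3) * Real.exp 2 := by
    rw [← Real.exp_add]; ring_nf
  have h3 : Real.exp (G - 3) ≤ Real.exp (v - 3) := Real.exp_le_exp.mpr (by linarith)
  have h4 : (1:ℝ) ≤ Real.exp (v - 3) := Real.one_le_exp (by linarith)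
  have h5 := e_poly
  nlinarith [h4, h5, h3]

/-! ### Tail sequences -/

def vseq (c : ℝ) (g : ℕ → ℝ) : ℕ → ℝ
  | 0 => c
  | j+1 => Real.exp (vseq c g j) - 1 -
      2 * Real.pi * (⌊(Real.exp (vseq c g j) - 1 - g (j+1)) / (2 * Real.pi)⌋ : ℤ)

def rseq (c : ℝ) (g : ℕ → ℝ) (j : ℕ) : ℤ :=
  ⌊(Real.exp (vseq c g j) - 1 - g (j+1)) / (2 * Real.pi)⌋

lemma vseq_succ (c : ℝ) (g : ℕ → ℝ) (j : ℕ) :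
    vseq c g (j+1) = Real.exp (vseq c g j) - 1 - 2 * Real.pi * (rseq c g j : ℝ) := rfl

section Tail

variable {c : ℝ} {g : ℕ → ℝ}
variable (hg3 : ∀ j, 3 ≤ g j) (hgrec : ∀ j, g (j+1) ≤ Real.exp (g j - 3) + 2) (hcg : g 0 ≤ c)

include hg3 hgrec hcg

lemma vseq_ge : ∀ j, g j ≤ vseq c g j := by
  intro j
  induction j with
  | zero => exact hcg
  | succ j ih =>
      rw [vseq_succ]
      have h2π : (0:ℝ) < 2 * Real.pi := by positivity
      have hfl : 2 * Real.pi * ((rseq c g j : ℤ) : ℝ) ≤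
          Real.exp (vseq c g j) - 1 - g (j+1) := by
        have := Int.floor_le ((Real.exp (vseq c g j) - 1 - g (j+1)) / (2 * Real.pi))
        calc 2 * Real.pi * ((rseq c g j : ℤ) : ℝ)
            ≤ 2 * Real.pi * ((Real.exp (vseq c g j) - 1 - g (j+1)) / (2 * Real.pi)) := by
              apply mul_le_mul_of_nonneg_left this h2π.le
          _ = Real.exp (vseq c g j) - 1 - g (j+1) := by field_simp
      linarith

lemma rseq_nonneg : ∀ j, 0 ≤ rseq c g j := by
  intro j
  have hv := vseq_ge hg3 hgrec hcg j
  have h2π : (0:ℝ) < 2 * Real.pi := by positivity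
  apply Int.floor_nonneg.mpr
  apply div_nonneg _ h2π.le
  have := num_key (hg3 j) hv
  have hrec := hgrec j
  have := Real.exp_pos (vseq c g j - 1)
  have := Real.exp_pos (g j - 3)
  have hpi := Real.pi_gt_three
  linarith

lemma rseq_log_ge : ∀ j, vseq c g j - 1 ≤ Real.log (1 + 2 * Real.pi * ((rseq c g j : ℤ) : ℝ)) := by
  intro j
  have hv := vseq_ge hg3 hgrec hcg j
  have h2π : (0:ℝ) < 2 * Real.pi := by positivity
  have hfl : (Real.exp (vseq c g j) - 1 - g (j+1)) / (2 * Real.pi) - 1 ≤ (rseq c g j : ℝ) :=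
    (Int.sub_one_lt_floor _).le
  have hval : Real.exp (vseq c g j) - 1 - g (j+1) - 2 * Real.pi ≤
      2 * Real.pi * ((rseq c g j : ℤ) : ℝ) := by
    have := mul_le_mul_of_nonneg_left hfl h2π.le
    calc Real.exp (vseq c g j) - 1 - g (j+1) - 2 * Real.pi
        = 2 * Real.pi * ((Real.exp (vseq c g j) - 1 - g (j+1)) / (2 * Real.pi) - 1) := by
          field_simp
      _ ≤ 2 * Real.pi * ((rseq c g j : ℤ) : ℝ) := this
  have hexp : Real.exp (vseq c g j - 1) ≤ 1 + 2 * Real.pi * ((rseq c g j : ℤ) : ℝ) := by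
    have hnk := num_key (hg3 j) hv
    have hrec := hgrec j
    linarith
  calc vseq c g j - 1 = Real.log (Real.exp (vseq c g j - 1)) := (Real.log_exp _).symm
    _ ≤ Real.log (1 + 2 * Real.pi * ((rseq c g j : ℤ) : ℝ)) :=
        Real.log_le_log (Real.exp_pos _) hexp

lemma vseq_pos : ∀ j, 0 < vseq c g j := by
  intro j; have := vseq_ge hg3 hgrec hcg j; have := hg3 j; linarith

end Tail


lemma escEndF_tendsto {x : ℝ × Addr} (hx : x ∈ escEndF) :
    Tendsto (fun n => Torb n x) atTop atTop := by
  obtain ⟨s, hs, rfl⟩ := hx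
  exact hs.2.2

/-! ### The construction lemma -/

lemma construction {x₀ z : ℝ × Addr} (hx₀ : x₀ ∈ escEndF) (hz : z ∈ escEndF)
    (horb : ∀ n, Torb n x₀ ≤ Torb n z) {θ : ℝ} (hθ : 0 < θ) (hθ1 : θ ≤ 1) (R : ℕ) :
    ∃ y ∈ escEndF, (∀ p ≤ R, y.2 p = z.2 p) ∧ z.1 + θ/2 < y.1 ∧ y.1 ≤ z.1 + θ ∧
      ∀ n, Torb n x₀ ≤ Torb n y := by
  obtain ⟨τ, s⟩ := z
  simp only at horb ⊢
  set γ : ℕ → ℝ := fun n => Torb n x₀ with hγdef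
  have hγ0 : ∀ n, 0 ≤ γ n := escEndF_subset_JF hx₀
  have hγrec : ∀ n, γ (n+1) ≤ Real.exp (γ n) - 1 := by
    intro n
    have : γ (n+1) = Real.exp (γ n) - 1 - 2 * Real.pi * |((x₀.2 (n+1) : ℤ) : ℝ)| :=
      Torb_succ x₀ n
    have hA : (0:ℝ) ≤ 2 * Real.pi * |((x₀.2 (n+1) : ℤ) : ℝ)| := by positivity
    linarith
  have hγten : Tendsto γ atTop atTop := by
    have h1 := (escEndF_mem hx₀).1.2.2
    have h2 : x₀ = (tmin x₀.2, x₀.2) := by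
      obtain ⟨s0, hs0, rfl⟩ := hx₀; rfl
    rw [hγdef]
    have : (fun n => (Fmodel^[n] (tmin x₀.2, x₀.2)).1) = fun n => Torb n x₀ := by
      funext n; rw [← h2]; rfl
    rwa [this] at h1
  have hzJ : (τ, s) ∈ JF := escEndF_subset_JF hz
  -- choose the cut time N'
  obtain ⟨N', hN'R, hN'ge⟩ := exists_FR_iter_ge hθ (4 + 2/θ) (R+1)
  set c : ℝ := Torb N' (τ + θ, s) with hcdef
  have hexpand := Torb_expand hzJ hθ.le N'
  have hτγ : ∀ n, γ n ≤ Torb n (τ, s) := horb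
  have hc_ge : γ N' + (4 + 2/θ) ≤ c := by
    have := hτγ N'
    linarith [hexpand, hN'ge]
  have h2θ : (0:ℝ) < 2/θ := by positivity
  have hc4 : 4 ≤ c := by have := hγ0 N'; linarith
  have hc0 : (0:ℝ) < c := by linarith
  have hcθ : 1/c < θ/2 := by
    have h1 : 2/θ < c := by have := hγ0 N'; linarith
    rw [div_lt_div_iff₀ hc0 (by norm_num : (0:ℝ) < 2)]
    rw [div_lt_iff₀ hθ] at h1
    nlinarith
  -- the prescribed tail
  set g : ℕ → ℝ := fun j => γ (N' + j) + 3 with hgdef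
  have hg3 : ∀ j, 3 ≤ g j := fun j => by have := hγ0 (N'+j); simp only [hgdef]; linarith
  have hgrec : ∀ j, g (j+1) ≤ Real.exp (g j - 3) + 2 := by
    intro j
    have h1 : γ (N' + (j+1)) ≤ Real.exp (γ (N'+j)) - 1 := by
      have := hγrec (N'+j); rwa [show N' + (j+1) = (N'+j)+1 by omega]
    simp only [hgdef]
    have : Real.exp (γ (N'+j) + 3 - 3) = Real.exp (γ (N'+j)) := by norm_num
    rw [this]
    linarith
  have hcg : g 0 ≤ c := by
    simp only [hgdef]
    have := hγ0 N'
    have h0 : γ (N' + 0) = γ N' := by norm_num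
    rw [h0]; linarith
  set s' : Addr := fun p => if p ≤ N' then s p else rseq c g (p - N' - 1) with hs'def
  have hagree : ∀ p, p ≤ N' → s' p = s p := by
    intro p hp; simp only [hs'def]; rw [if_pos hp]
  have hTagree : ∀ (t : ℝ) n, n ≤ N' → Torb n (t, s') = Torb n (t, s) := by
    intro t n hn
    exact Torb_congr n rfl fun p h1 h2 => hagree p (h2.trans hn)
  have hs'tail : ∀ j, s' (N' + j + 1) = rseq c g j := by
    intro j; simp only [hs'def]
    rw [if_neg (by omega)]
    congr 1; omega
  have hTv : ∀ j, Torb (N' + j) (τ + θ, s') = vseq c g j := by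
    intro j
    induction j with
    | zero => rw [show N' + 0 = N' by omega]; exact hTagree (τ+θ) N' le_rfl
    | succ j ih =>
        rw [show N' + (j+1) = (N'+j)+1 by omega, Torb_succ, ih]
        show Real.exp (vseq c g j) - 1 - 2*Real.pi*|((s' (N'+j+1) : ℤ) : ℝ)| = _
        rw [hs'tail j, vseq_succ]
        congr 1
        rw [abs_of_nonneg (by exact_mod_cast rseq_nonneg hg3 hgrec hcg j)]
  have hJ' : (τ + θ, s') ∈ JF := by
    intro n
    show 0 ≤ Torb n (τ + θ, s')
    rcases le_or_gt n N' with hn | hn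
    · rw [hTagree _ n hn]
      calc (0:ℝ) ≤ Torb n (τ, s) := hzJ n
        _ ≤ Torb n (τ + θ, s) := Torb_mono s (by linarith) n
    · obtain ⟨j, rfl⟩ : ∃ j, n = N' + j := ⟨n - N', by omega⟩
      rw [hTv j]
      exact (vseq_pos hg3 hgrec hcg j).le
  have hExp : ExpBounded s' := ⟨τ + θ, hJ'⟩
  set ty := tmin s' with htydef
  have hty_le : ty ≤ τ + θ := tmin_le hJ'
  have hTlow : ∀ t : ℝ, (t, s') ∈ JF → ∀ j, vseq c g j - 1 ≤ Torb (N' + j) (t, s') := by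
    intro t ht j
    have h1 := Torb_ge_log ht (N' + j)
    have h2 : ((t, s').2 (N'+j+1) : ℤ) = rseq c g j := hs'tail j
    rw [h2] at h1
    rw [abs_of_nonneg (by exact_mod_cast rseq_nonneg hg3 hgrec hcg j)] at h1
    exact (rseq_log_ge hg3 hgrec hcg j).trans h1
  have hback : ∀ t : ℝ, (t, s') ∈ JF → τ + θ - 1/c ≤ t := by
    intro t ht
    rcases le_or_gt (τ + θ) t with h | h
    · have : (0:ℝ) < 1/c := by positivity
      linarith
    · -- t < τ + θ
      have htnn : ∀ n, n ≤ N' → 0 ≤ Torb n (t, s) := by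
        intro n hn; rw [← hTagree t n hn]; exact ht n
      have key : ∀ n, n ≤ N' → τ + θ - t ≤ Torb n (τ+θ, s) - Torb n (t, s) := by
        intro n
        induction n with
        | zero => intro _; simp [Torb_zero]
        | succ n ih =>
            intro hn
            have hn' : n ≤ N' := by omega
            have ihn := ih hn'
            rw [Torb_succ, Torb_succ]
            simp only [show ((τ+θ, s).2 : Addr) = s from rfl, show ((t, s).2 : Addr) = s from rfl]
            have hb0 : 0 ≤ Torb n (t, s) := htnn n hn'
            have hab : Torb n (t, s) ≤ Torb n (τ+θ, s) := Torb_mono s (by linarith) n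
            have hexp1 : Real.exp (Torb n (τ+θ,s)) - Real.exp (Torb n (t,s)) ≥
                Torb n (τ+θ,s) - Torb n (t,s) := by
              have h1 : Real.exp (Torb n (τ+θ,s)) = Real.exp (Torb n (t,s)) *
                  Real.exp (Torb n (τ+θ,s) - Torb n (t,s)) := by
                rw [← Real.exp_add]; ring_nf
              have h2 : (1:ℝ) ≤ Real.exp (Torb n (t,s)) := Real.one_le_exp hb0
              nlinarith [Real.add_one_le_exp (Torb n (τ+θ,s) - Torb n (t,s)),
                Real.exp_pos (Torb n (τ+θ,s) - Torb n (t,s))]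
            linarith
      obtain ⟨m, rfl⟩ : ∃ m, N' = m + 1 := ⟨N' - 1, by omega⟩
      have hkeym := key m (by omega)
      set a' := Torb m (τ+θ, s) with ha'
      set b' := Torb m (t, s) with hb'
      have hb'0 : 0 ≤ b' := htnn m (by omega)
      have hab : b' ≤ a' := Torb_mono s (by linarith) m
      -- exp b' ≥ c
      have hTN't : c - 1 ≤ Torb (m+1) (t, s) := by
        have := hTlow t ht 0
        rw [show (m+1) + 0 = m+1 by omega] at this
        rw [hTagree t (m+1) le_rfl] at this
        exact this
      have hexpb' : c ≤ Real.exp b' := by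
        have h1 : Torb (m+1) (t, s) = Real.exp b' - 1 - 2*Real.pi*|((s (m+1) : ℤ) : ℝ)| := by
          rw [Torb_succ]
        have hA : (0:ℝ) ≤ 2*Real.pi*|((s (m+1) : ℤ) : ℝ)| := by positivity
        linarith
      -- D_{N'} ≤ 1 and D_{N'} ≥ exp b' * (τ+θ−t)
      have hDN : Torb (m+1) (τ+θ, s) - Torb (m+1) (t, s) ≤ 1 := by
        have h1 : Torb (m+1) (τ+θ, s) = c := rfl
        linarith
      have hDNge : Real.exp b' * (τ + θ - t) ≤ Torb (m+1) (τ+θ,s) - Torb (m+1) (t,s) := by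
        rw [Torb_succ, Torb_succ]
        simp only [show ((τ+θ, s).2 : Addr) = s from rfl, show ((t, s).2 : Addr) = s from rfl]
        have h1 : Real.exp a' = Real.exp b' * Real.exp (a' - b') := by
          rw [← Real.exp_add]; ring_nf
        have h2 : a' - b' ≥ τ + θ - t := hkeym
        have h3 : Real.exp (a' - b') ≥ 1 + (a' - b') := by
          have := Real.add_one_le_exp (a' - b'); linarith
        have h4 : (0:ℝ) < Real.exp b' := Real.exp_pos b'
        nlinarith
      have : Real.exp b' * (τ + θ - t) ≤ 1 := by linarith
      have hc' : c * (τ + θ - t) ≤ 1 := by nlinarith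
      have hfin : τ + θ - t ≤ 1/c := by
        rw [le_div_iff₀ hc0]; linarith
      linarith
  have htyJ : (ty, s') ∈ JF := tmin_mem hExp
  have hty_gt : τ + θ/2 < ty := by
    have := hback ty htyJ
    linarith
  have hty_orbit : ∀ n, γ n ≤ Torb n (ty, s') := by
    intro n
    rcases le_or_gt n N' with hn | hn
    · rw [hTagree ty n hn]
      calc γ n ≤ Torb n (τ, s) := hτγ n
        _ ≤ Torb n (ty, s) := Torb_mono s (by linarith) n
    · obtain ⟨j, rfl⟩ : ∃ j, n = N' + j := ⟨n - N', by omega⟩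
      have h1 := hTlow ty htyJ j
      have h2 : g j ≤ vseq c g j := vseq_ge hg3 hgrec hcg j
      simp only [hgdef] at h2
      linarith
  have hfast : Fast s' := by
    refine ⟨hExp, htyJ, ?_⟩
    exact tendsto_atTop_mono hty_orbit hγten
  refine ⟨(ty, s'), ⟨s', hfast, rfl⟩, ?_, hty_gt, hty_le, hty_orbit⟩
  intro p hp
  exact hagree p (by omega)


/-! ### Box neighborhoods -/

lemma exists_box {O : Set (ℝ × Addr)} (hO : IsOpen O) {z : ℝ × Addr} (hz : z ∈ O) :
    ∃ δ : ℝ, 0 < δ ∧ ∃ N : ℕ, ∀ x : ℝ × Addr,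
      |x.1 - z.1| < δ → (∀ p ≤ N, x.2 p = z.2 p) → x ∈ O := by
  have hnh : O ∈ 𝓝 z := hO.mem_nhds hz
  rw [nhds_prod_eq, Filter.mem_prod_iff] at hnh
  obtain ⟨U, hU, V, hV, hUV⟩ := hnh
  obtain ⟨δ, hδ, hball⟩ := Metric.mem_nhds_iff.mp hU
  rw [nhds_pi, Filter.mem_pi] at hV
  obtain ⟨I, hIfin, tset, htmem, hsub⟩ := hV
  obtain ⟨N, hN⟩ := hIfin.bddAbove
  refine ⟨δ, hδ, N, fun x hx1 hx2 => ?_⟩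
  apply hUV
  constructor
  · apply hball; rw [Metric.mem_ball, Real.dist_eq]; exact hx1
  · apply hsub
    intro i hi
    show x.2 i ∈ tset i
    rw [hx2 i (hN hi)]
    exact mem_of_mem_nhds (htmem i)

/-! ### The Zorn engine -/

lemma engine {B K : Set (ℝ × Addr)} (hBE : B ⊆ escEndF)
    (hK : IsCompact K) (hBK : B ⊆ K)
    (hopen : ∀ x ∈ B, ∃ O, IsOpen O ∧ x ∈ O ∧ O ∩ escEndF ⊆ B)
    (hclosed : ∀ x ∈ escEndF, x ∈ closure B → x ∈ B) :
    B = ∅ := by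
  by_contra hne
  obtain ⟨x₀, hx₀⟩ := Set.nonempty_iff_ne_empty.mpr hne
  have hx₀E : x₀ ∈ escEndF := hBE hx₀
  set S : Set (Set (ℝ × Addr)) := {C | C ⊆ B ∧ x₀ ∈ C ∧
      (∀ x ∈ C, ∀ n, Torb n x₀ ≤ Torb n x) ∧
      (∀ x ∈ C, ∀ y ∈ C, x.1 = y.1 → x = y) ∧
      (∀ x ∈ C, ∀ y ∈ C, x.1 < y.1 → ∀ p, p ≤ Ndom x (y.1 - x.1) → x.2 p = y.2 p)}
    with hSdef
  have hsingle : {x₀} ∈ S := by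
    refine ⟨by simpa using hx₀, rfl, ?_, ?_, ?_⟩
    · rintro x rfl n; exact le_rfl
    · rintro x rfl y rfl _; rfl
    · rintro x rfl y rfl h; exact absurd h (lt_irrefl _)
  have hchain_cond : ∀ c ⊆ S, IsChain (· ⊆ ·) c → c.Nonempty →
      ∃ ub ∈ S, ∀ s ∈ c, s ⊆ ub := by
    intro c hcS hchain hcne
    refine ⟨⋃₀ c, ?_, fun s hs => subset_sUnion_of_mem hs⟩
    obtain ⟨C1, hC1⟩ := hcne
    refine ⟨?_, Set.mem_sUnion.mpr ⟨C1, hC1, (hcS hC1).2.1⟩, ?_, ?_, ?_⟩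
    · rintro x ⟨C, hC, hxC⟩; exact (hcS hC).1 hxC
    · rintro x ⟨C, hC, hxC⟩ n; exact (hcS hC).2.2.1 x hxC n
    · rintro x ⟨C, hC, hxC⟩ y ⟨C', hC', hyC'⟩ hxy
      rcases hchain.total hC hC' with h | h
      · exact (hcS hC').2.2.2.1 x (h hxC) y hyC' hxy
      · exact (hcS hC).2.2.2.1 x hxC y (h hyC') hxy
    · rintro x ⟨C, hC, hxC⟩ y ⟨C', hC', hyC'⟩ hxy p hp
      rcases hchain.total hC hC' with h | h
      · exact (hcS hC').2.2.2.2 x (h hxC) y hyC' hxy p hp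
      · exact (hcS hC).2.2.2.2 x hxC y (h hyC') hxy p hp
  obtain ⟨M, hx₀M, hM⟩ := zorn_subset_nonempty S hchain_cond {x₀} hsingle
  have hMS : M ∈ S := hM.1
  obtain ⟨hMB, hx₀inM, hMorb, hMinj, hMcare⟩ := hMS
  have hx₀M' : x₀ ∈ M := hx₀inM
  have hMne : (Prod.fst '' M).Nonempty := ⟨x₀.1, x₀, hx₀M', rfl⟩
  have hbddK : BddAbove (Prod.fst '' K) := (hK.image continuous_fst).bddAbove
  have hbdd : BddAbove (Prod.fst '' M) :=
    hbddK.mono (Set.image_mono (hMB.trans hBK))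
  set τ : ℝ := sSup (Prod.fst '' M) with hτdef
  have hleτ : ∀ x ∈ M, x.1 ≤ τ := fun x hx => le_csSup hbdd ⟨x, hx, rfl⟩
  by_cases hattain : ∃ z ∈ M, z.1 = τ
  case pos =>
    obtain ⟨z, hzM, hzτ⟩ := hattain
    have hzB : z ∈ B := hMB hzM
    have hzE : z ∈ escEndF := hBE hzB
    obtain ⟨O, hOopen, hzO, hOB⟩ := hopen z hzB
    obtain ⟨δ, hδ, Nbox, hbox⟩ := exists_box hOopen hzO
    set θ : ℝ := min δ 1 / 2 with hθdef
    have hθpos : 0 < θ := by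
      rw [hθdef]
      have : (0:ℝ) < min δ 1 := lt_min hδ one_pos
      linarith
    have hθ1 : θ ≤ 1 := by
      have : min δ 1 ≤ 1 := min_le_right _ _
      rw [hθdef]; linarith
    have hθδ : θ < δ := by
      have : min δ 1 ≤ δ := min_le_left _ _
      rw [hθdef]; linarith
    set R : ℕ := max Nbox (Ndom z (θ/2)) with hRdef
    obtain ⟨y, hyE, hyagree, hylt, hyle, hyorb⟩ :=
      construction hx₀E hzE (hMorb z hzM) hθpos hθ1 R
    have hyB : y ∈ B := by
      apply hOB
      refine ⟨hbox y ?_ ?_, hyE⟩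
      · rw [abs_of_nonneg (by linarith)]
        linarith
      · intro p hp
        exact hyagree p (le_trans hp (le_max_left _ _))
    have hyM : y ∉ M := fun hyM => by
      have h1 := hleτ y hyM
      rw [← hzτ] at h1
      linarith
    have hGood' : insert y M ∈ S := by
      refine ⟨?_, Set.mem_insert_of_mem _ hx₀M', ?_, ?_, ?_⟩
      · rintro x (rfl | hx)
        · exact hyB
        · exact hMB hx
      · rintro x (rfl | hx) n
        · exact hyorb n
        · exact hMorb x hx n
      · rintro x (rfl | hx) w (rfl | hw) h
        · rfl
        · exfalso; have := hleτ w hw; rw [hzτ] at hylt; linarith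
        · exfalso; have := hleτ x hx; rw [hzτ] at hylt; linarith
        · exact hMinj x hx w hw h
      · rintro x (rfl | hx) w (rfl | hw) h p hp
        · exact absurd h (lt_irrefl _)
        · -- y.1 < w.1 for w ∈ M: impossible
          exfalso; have := hleτ w hw; rw [hzτ] at hylt; linarith
        · -- x ∈ M, w = y
          rcases eq_or_lt_of_le (hleτ x hx) with hxτ | hxτ
          · have hxz : x = z := hMinj x hx z hzM (by rw [hxτ, hzτ])
            subst hxz
            have h1 : Ndom x (w.1 - x.1) ≤ Ndom x (θ/2) := by
              apply Ndom_anti (hBE (hMB hx)) (by linarith)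
              linarith [hylt]
            have h2 : p ≤ R := le_trans hp (le_trans h1 (le_max_right _ _))
            exact (hyagree p h2).symm
          · have hxE : x ∈ escEndF := hBE (hMB hx)
            have hcare_xz := hMcare x hx z hzM (by rw [hzτ]; exact hxτ)
            set dx : ℕ := Ndom x (z.1 - x.1) with hdxdef
            have hw1 : τ + θ/2 < w.1 := by rw [← hzτ]; exact hylt
            have hbz : z.1 - θ/2 ≤ bfun (Ndom z (θ/2)) z.2 :=
              Ndom_spec hzE (by linarith)
            rcases le_or_gt (Ndom z (θ/2)) dx with hcase | hcase
            · -- case A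
              have hbx : bfun (Ndom z (θ/2)) x.2 = bfun (Ndom z (θ/2)) z.2 :=
                bfun_congr fun q h1q h2q => hcare_xz q (le_trans h2q hcase)
              have hmx : Ndom x (w.1 - x.1) ≤ Ndom z (θ/2) := by
                apply Nat.sInf_le
                show x.1 - (w.1 - x.1) ≤ bfun (Ndom z (θ/2)) x.2
                rw [hbx]
                have hx1 : x.1 ≤ τ := hleτ x hx
                rw [hzτ] at hbz
                linarith
              have hpN : p ≤ Ndom z (θ/2) := le_trans hp hmx
              have e1 : x.2 p = z.2 p := hcare_xz p (le_trans hpN hcase)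
              have e2 : w.2 p = z.2 p := hyagree p (le_trans hpN (le_max_right _ _))
              rw [e1, e2]
            · -- case B
              have hbx : x.1 - (z.1 - x.1) ≤ bfun dx x.2 := by
                apply Ndom_spec hxE
                rw [hzτ]; linarith
              have hmx : Ndom x (w.1 - x.1) ≤ dx := by
                apply Nat.sInf_le
                show x.1 - (w.1 - x.1) ≤ bfun dx x.2
                have : z.1 < w.1 := by rw [hzτ]; linarith
                linarith
              have e1 : x.2 p = z.2 p := hcare_xz p (le_trans hp hmx)
              have e2 : w.2 p = z.2 p :=
                hyagree p (le_trans (le_trans hp hmx) (le_trans hcase.le (le_max_right _ _)))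
              rw [e1, e2]
        · exact hMcare x hx w hw h p hp
    have := hM.2 hGood' (Set.subset_insert y M)
    exact hyM (this (Set.mem_insert y M))
  case neg =>
    push_neg at hattain
    have hlt : ∀ x ∈ M, x.1 < τ := fun x hx =>
      lt_of_le_of_ne (hleτ x hx) (hattain x hx)
    have hex : ∀ i : ℕ, ∃ x, x ∈ M ∧ τ - 1/((i:ℝ)+1) < x.1 := by
      intro i
      have h1 : τ - 1/((i:ℝ)+1) < τ := by
        have : (0:ℝ) < 1/((i:ℝ)+1) := by positivity
        linarith
      obtain ⟨a, ⟨x, hxM, rfl⟩, ha⟩ := exists_lt_of_lt_csSup hMne h1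
      exact ⟨x, hxM, ha⟩
    choose xi hxiM hxit using hex
    have hxiK : ∀ i, xi i ∈ K := fun i => hBK (hMB (hxiM i))
    obtain ⟨zs, hzsK, φ, hφ, hconv⟩ := hK.tendsto_subseq hxiK
    have ht_conv : Tendsto (fun i => (xi (φ i)).1) atTop (𝓝 zs.1) :=
      (continuous_fst.tendsto zs).comp hconv
    have hone : Tendsto (fun i : ℕ => 1/((φ i : ℝ)+1)) atTop (𝓝 0) := by
      have h2 : Tendsto (fun n : ℕ => 1/((n : ℝ)+1)) atTop (𝓝 0) :=
        tendsto_one_div_add_atTop_nhds_zero_nat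
      exact h2.comp hφ.tendsto_atTop
    have hzs1 : zs.1 = τ := by
      apply le_antisymm
      · exact le_of_tendsto ht_conv (Eventually.of_forall fun i => hleτ _ (hxiM (φ i)))
      · have hlow : Tendsto (fun i => τ - 1/((φ i : ℝ)+1)) atTop (𝓝 τ) := by
          have h3 := Tendsto.sub (tendsto_const_nhds : Tendsto (fun _ : ℕ => τ) atTop (𝓝 τ)) hone
          simpa using h3
        exact le_of_tendsto_of_tendsto' hlow ht_conv fun i => (hxit (φ i)).le
    have hcoord : ∀ p : ℕ, ∀ᶠ i in atTop, (xi (φ i)).2 p = zs.2 p := by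
      intro p
      have h1 : Tendsto (fun i => (xi (φ i)).2 p) atTop (𝓝 (zs.2 p)) :=
        (((continuous_apply p).comp continuous_snd).tendsto zs).comp hconv
      rwa [nhds_discrete, tendsto_pure] at h1
    have hzsJ : zs ∈ JF :=
      JF_closed.mem_of_tendsto hconv
        (Eventually.of_forall fun i => escEndF_subset_JF (hBE (hMB (hxiM (φ i)))))
    have hzsExp : ExpBounded zs.2 := ⟨zs.1, by rw [Prod.mk.eta]; exact hzsJ⟩
    have hagree2 : ∀ x ∈ M, ∀ p, p ≤ Ndom x (τ - x.1) → zs.2 p = x.2 p := by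
      intro x hx p hp
      have hxlt := hlt x hx
      have hev1 : ∀ᶠ i in atTop, x.1 < (xi (φ i)).1 := by
        have h2 := ht_conv
        rw [hzs1] at h2
        exact h2.eventually (eventually_gt_nhds hxlt)
      obtain ⟨i, hi1, hi2⟩ := ((hcoord p).and hev1).exists
      have hcare := hMcare x hx (xi (φ i)) (hxiM (φ i)) hi2
      have hD : Ndom x (τ - x.1) ≤ Ndom x ((xi (φ i)).1 - x.1) := by
        apply Ndom_anti (hBE (hMB hx)) (by linarith)
        have := hleτ _ (hxiM (φ i))
        linarith
      rw [← hi1]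
      exact (hcare p (le_trans hp hD)).symm
    have hkey : ∀ x ∈ M, x.1 - (τ - x.1) ≤ tmin zs.2 := by
      intro x hx
      have hxlt := hlt x hx
      have hb := Ndom_spec (hBE (hMB hx)) (show 0 < τ - x.1 by linarith)
      have hcongr : bfun (Ndom x (τ - x.1)) zs.2 = bfun (Ndom x (τ - x.1)) x.2 :=
        bfun_congr fun q _ h2q => hagree2 x hx q h2q
      have hle := bfun_le_tmin hzsExp (Ndom x (τ - x.1))
      rw [hcongr] at hle
      linarith
    have htmin : tmin zs.2 = τ := by
      apply le_antisymm
      · have := tmin_le (show (zs.1, zs.2) ∈ JF by rw [Prod.mk.eta]; exact hzsJ)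
        rw [hzs1] at this
        exact this
      · by_contra hc
        push_neg at hc
        set ε := τ - tmin zs.2 with hεdef
        have hε : 0 < ε := by linarith
        obtain ⟨i, hi⟩ := exists_nat_one_div_lt (show (0:ℝ) < ε/2 by linarith)
        have h1 := hxit i
        have h2 := hkey (xi i) (hxiM i)
        have : (1:ℝ)/((i:ℝ)+1) < ε/2 := hi
        linarith
    have horbzs : ∀ n, Torb n x₀ ≤ Torb n zs := fun n =>
      ge_of_tendsto (((continuous_Torb n).tendsto zs).comp hconv)
        (Eventually.of_forall fun i => hMorb _ (hxiM (φ i)) n)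
    have hzseq : (tmin zs.2, zs.2) = zs := by
      rw [htmin, ← hzs1]
    have hFast : Fast zs.2 := by
      refine ⟨hzsExp, ?_, ?_⟩
      · rw [hzseq]; exact hzsJ
      · have h1 : Tendsto (fun n => Torb n zs) atTop atTop :=
          tendsto_atTop_mono horbzs (escEndF_tendsto hx₀E)
        have h2 : (fun n => (Fmodel^[n] (tmin zs.2, zs.2)).1) = fun n => Torb n zs := by
          funext n; rw [hzseq]; rfl
        rw [h2]
        exact h1
    have hzsE : zs ∈ escEndF := ⟨zs.2, hFast, hzseq.symm⟩
    have hzsB : zs ∈ B := hclosed zs hzsE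
      (mem_closure_of_tendsto hconv (Eventually.of_forall fun i => hMB (hxiM (φ i))))
    have hzsM : zs ∉ M := fun h => hattain zs h hzs1
    have hGood' : insert zs M ∈ S := by
      refine ⟨?_, Set.mem_insert_of_mem _ hx₀M', ?_, ?_, ?_⟩
      · rintro x (rfl | hx)
        · exact hzsB
        · exact hMB hx
      · rintro x (rfl | hx) n
        · exact horbzs n
        · exact hMorb x hx n
      · rintro x (rfl | hx) w (rfl | hw) h
        · rfl
        · exfalso; have := hlt w hw; rw [hzs1] at h; linarith
        · exfalso; have := hlt x hx; rw [hzs1] at h; linarith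
        · exact hMinj x hx w hw h
      · rintro x (rfl | hx) w (rfl | hw) h p hp
        · exact absurd h (lt_irrefl _)
        · exfalso; have := hlt w hw; rw [hzs1] at h; linarith
        · -- x ∈ M, w = zs
          have hxlt := hlt x hx
          rw [hzs1] at hp
          exact (hagree2 x hx p hp).symm
        · exact hMcare x hx w hw h p hp
    have := hM.2 hGood' (Set.subset_insert zs M)
    exact hzsM (this (Set.mem_insert zs M))


/-! ### Total separation -/

lemma totallySep : TotallySeparatedSpace ↥escEndF := by
  constructor
  intro x _ y _ hxy
  have hvalne : x.val ≠ y.val := fun h => hxy (Subtype.ext h)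
  have haddr : x.val.2 ≠ y.val.2 := by
    intro h
    apply hvalne
    have hx := (escEndF_mem x.property).2
    have hy := (escEndF_mem y.property).2
    have : x.val = (tmin x.val.2, x.val.2) := by
      rw [← hx]
    have hy' : y.val = (tmin y.val.2, y.val.2) := by
      rw [← hy]
    rw [this, hy', h]
  obtain ⟨p, hp⟩ : ∃ p, x.val.2 p ≠ y.val.2 p := by
    by_contra hc
    push_neg at hc
    exact haddr (funext hc)
  have hcont : Continuous fun w : ↥escEndF => w.val.2 p :=
    ((continuous_apply p).comp continuous_snd).comp continuous_subtype_val
  refine ⟨{w : ↥escEndF | w.val.2 p = x.val.2 p}, {w : ↥escEndF | w.val.2 p ≠ x.val.2 p},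
    ?_, ?_, rfl, fun h => hp (Eq.symm h), ?_, ?_⟩
  · exact hcont.isOpen_preimage {x.val.2 p} (isOpen_discrete _)
  · exact hcont.isOpen_preimage {x.val.2 p}ᶜ (isOpen_discrete _)
  · intro w _
    by_cases h : w.val.2 p = x.val.2 p
    · exact Or.inl h
    · exact Or.inr h
  · rw [Set.disjoint_iff]
    rintro w ⟨h1, h2⟩
    exact h2 h1

/-! ### The branch lemma -/

lemma branch {u v : Set (OnePoint (ℝ × Addr))} (hu : IsOpen u) (hv : IsOpen v)
    (hcover : insert (∞ : OnePoint (ℝ × Addr))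
      ((fun x : ℝ × Addr => (x : OnePoint (ℝ × Addr))) '' escEndF) ⊆ u ∪ v)
    (hinf : (∞ : OnePoint (ℝ × Addr)) ∈ u)
    (hbv : (insert (∞ : OnePoint (ℝ × Addr))
      ((fun x : ℝ × Addr => (x : OnePoint (ℝ × Addr))) '' escEndF) ∩ v).Nonempty)
    (hdisj : insert (∞ : OnePoint (ℝ × Addr))
      ((fun x : ℝ × Addr => (x : OnePoint (ℝ × Addr))) '' escEndF) ∩ (u ∩ v) = ∅) :
    False := by
  set SS := insert (∞ : OnePoint (ℝ × Addr))
      ((fun x : ℝ × Addr => (x : OnePoint (ℝ × Addr))) '' escEndF) with hSSdef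
  have hmemS : ∀ x : ℝ × Addr, x ∈ escEndF → ((x : OnePoint (ℝ × Addr)) ∈ SS) := by
    intro x hx
    exact Set.mem_insert_of_mem _ ⟨x, hx, rfl⟩
  have hdisj' : ∀ w, w ∈ SS → w ∈ u → w ∈ v → False := by
    intro w h1 h2 h3
    have : w ∈ SS ∩ (u ∩ v) := ⟨h1, h2, h3⟩
    rw [hdisj] at this
    exact this
  set B : Set (ℝ × Addr) := {x | x ∈ escEndF ∧ (x : OnePoint (ℝ × Addr)) ∈ v} with hBdef
  have hBE : B ⊆ escEndF := fun x hx => hx.1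
  obtain ⟨hKclosed, hKcompact⟩ := (OnePoint.isOpen_iff_of_mem hinf).mp hu
  have hBK : B ⊆ ((fun x : ℝ × Addr => (x : OnePoint (ℝ × Addr))) ⁻¹' u)ᶜ := by
    intro x hx hxu
    exact hdisj' _ (hmemS x hx.1) hxu hx.2
  have hopen : ∀ x ∈ B, ∃ O, IsOpen O ∧ x ∈ O ∧ O ∩ escEndF ⊆ B := by
    intro x hx
    refine ⟨(fun y : ℝ × Addr => (y : OnePoint (ℝ × Addr))) ⁻¹' v,
      hv.preimage OnePoint.continuous_coe, hx.2, ?_⟩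
    rintro y ⟨hy1, hy2⟩
    exact ⟨hy2, hy1⟩
  have hclosed : ∀ x ∈ escEndF, x ∈ closure B → x ∈ B := by
    intro x hxE hxcl
    have hxS : (x : OnePoint (ℝ × Addr)) ∈ SS := hmemS x hxE
    rcases hcover hxS with hxu | hxv
    · exfalso
      have hopen' : IsOpen ((fun y : ℝ × Addr => (y : OnePoint (ℝ × Addr))) ⁻¹' u) :=
        hu.preimage OnePoint.continuous_coe
      obtain ⟨w, hw1, hw2⟩ := (mem_closure_iff.mp hxcl) _ hopen' hxu
      exact hdisj' _ (hmemS w hw2.1) hw1 hw2.2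
    · exact ⟨hxE, hxv⟩
  have hBne : B.Nonempty := by
    obtain ⟨b, hbS, hbv'⟩ := hbv
    rcases hbS with rfl | ⟨x, hxE, rfl⟩
    · exact absurd (hdisj' _ (Set.mem_insert _ _) hinf hbv') id
    · exact ⟨x, hxE, hbv'⟩
  have := engine hBE hKcompact hBK hopen hclosed
  rw [this] at hBne
  exact Set.not_nonempty_empty hBne

end ME


/-- **Escaping endpoints of the model explode.** `Ẽ(𝓕) ∪ {∞}` is connected in the
one-point compactification of `ℝ × ℤ^ℕ`, and `Ẽ(𝓕)` is totally separated; that is, `∞` is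
an explosion point for `Ẽ(𝓕) ∪ {∞}`. -/
theorem model_escaping_endpoints_explode :
    IsConnected (insert (∞ : OnePoint (ℝ × Addr))
      ((fun x : ℝ × Addr => (x : OnePoint (ℝ × Addr))) '' escEndF)) ∧
    TotallySeparatedSpace ↥escEndF := by
  constructor
  · constructor
    · exact ⟨∞, Set.mem_insert _ _⟩
    · intro u v hu hv hcover hune hvne
      by_contra hempty
      rw [Set.not_nonempty_iff_eq_empty] at hempty
      have hinfS : (∞ : OnePoint (ℝ × Addr)) ∈ insert (∞ : OnePoint (ℝ × Addr))
          ((fun x : ℝ × Addr => (x : OnePoint (ℝ × Addr))) '' escEndF) := Set.mem_insert _ _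
      rcases hcover hinfS with hinf | hinf
      · exact ME.branch hu hv hcover hinf hvne hempty
      · apply ME.branch hv hu ?_ hinf hune ?_
        · rw [Set.union_comm]; exact hcover
        · rw [Set.inter_comm v u]; exact hempty
  · exact ME.totallySep

end
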